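/- Let x, y be distinct points in the interior of K, and let p, q ∈ K be points such that p, x, y, q lie on a common line in this order with x ≠ p and y ≠ q (i.e., x is in the open segment (p, y) and y is in the open segment (x, q)). Then the cross-ratio quantity σ(x, y) = (|x−y|·|p−q|)/(|p−x|·|q−y|), where |·| denotes the Euclidean norm of the difference, satisfies σ(x, y) ≥ (1/√m)·‖x − y‖ₓ. -/

import Mathlib

open Matrix Real

/-- The closed polytope K = {x : aᵢᵀx ≥ bᵢ for all i}. -/
def polyK {n m : ℕ} (a : Fin m → Fin n → ℝ) (b : Fin m → ℝ) : Set (Fin n → ℝ) :=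
  {x | ∀ i, b i ≤ a i ⬝ᵥ x}

/-- Interior of the polytope K. -/
def intK {n m : ℕ} (a : Fin m → Fin n → ℝ) (b : Fin m → ℝ) : Set (Fin n → ℝ) :=
  {x | ∀ i, b i < a i ⬝ᵥ x}

/-- Hessian of the log-barrier: H(x) = ∑ᵢ aᵢaᵢᵀ/(aᵢᵀx − bᵢ)². -/
noncomputable def Hmat {n m : ℕ} (a : Fin m → Fin n → ℝ) (b : Fin m → ℝ)
    (x : Fin n → ℝ) : Matrix (Fin n) (Fin n) ℝ :=
  ∑ i, ((a i ⬝ᵥ x - b i) ^ 2)⁻¹ • vecMulVec (a i) (a i)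

/-- Local norm at x: ‖v‖ₓ = √(vᵀ H(x) v). -/
noncomputable def localNorm {n m : ℕ} (a : Fin m → Fin n → ℝ) (b : Fin m → ℝ)
    (x v : Fin n → ℝ) : ℝ :=
  Real.sqrt (v ⬝ᵥ (Hmat a b x).mulVec v)

/-- Euclidean norm on ℝⁿ. -/
noncomputable def eNorm {n : ℕ} (v : Fin n → ℝ) : ℝ :=
  Real.sqrt (∑ i, (v i) ^ 2)

theorem quad_eq' {n m : ℕ} (a : Fin m → Fin n → ℝ) (b : Fin m → ℝ) (x v : Fin n → ℝ) :
    v ⬝ᵥ (Hmat a b x).mulVec v = ∑ i, ((a i ⬝ᵥ x - b i) ^ 2)⁻¹ * (a i ⬝ᵥ v) ^ 2 := by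
  simp only [Hmat, Matrix.mulVec, dotProduct, Matrix.sum_apply, vecMulVec_apply,
    Matrix.smul_apply, smul_eq_mul, Finset.sum_mul, Finset.mul_sum, sq]
  rw [show ∀ (f : Fin n → Fin n → Fin m → ℝ), (∑ j, ∑ k, ∑ i, f j k i) = ∑ i, ∑ j, ∑ k, f j k i from
    fun f => by
      rw [show (∑ j, ∑ k, ∑ i, f j k i) = ∑ j, ∑ i, ∑ k, f j k i from
        Finset.sum_congr rfl fun j _ => Finset.sum_comm]
      exact Finset.sum_comm]
  refine Finset.sum_congr rfl fun i _ => ?_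
  refine Finset.sum_congr rfl fun j _ => ?_
  refine Finset.sum_congr rfl fun k _ => by ring

theorem eNorm_smul' {n : ℕ} (r : ℝ) (w : Fin n → ℝ) : eNorm (r • w) = |r| * eNorm w := by
  unfold eNorm
  rw [← Real.sqrt_sq_eq_abs, ← Real.sqrt_mul (sq_nonneg r), Finset.mul_sum]
  congr 1
  exact Finset.sum_congr rfl fun i _ => by simp [smul_eq_mul]; ring

theorem hilbert_vs_local_norm {n m : ℕ} (hn : 1 ≤ n)
    (a : Fin m → Fin n → ℝ) (b : Fin m → ℝ)
    (hbdd : Bornology.IsBounded (polyK a b))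
    (x y p q : Fin n → ℝ)
    (hx : x ∈ intK a b) (hy : y ∈ intK a b)
    (hp : p ∈ polyK a b) (hq : q ∈ polyK a b)
    (hxy : x ≠ y) (hxp : x ≠ p) (hyq : y ≠ q)
    (hxseg : x ∈ openSegment ℝ p y) (hyseg : y ∈ openSegment ℝ x q) :
    (eNorm (x - y) * eNorm (p - q)) / (eNorm (p - x) * eNorm (q - y)) ≥
      (1 / Real.sqrt m) * localNorm a b x (x - y) := by
  obtain ⟨α, β, hα, hβ, hαβ, hxe⟩ := hxseg
  obtain ⟨γ, δ, hγ, hδ, hγδ, hye⟩ := hyseg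
  set v : Fin n → ℝ := x - y with hv
  set s := β / α with hsdef
  set t := γ / δ with htdef
  have hs : 0 < s := div_pos hβ hα
  have ht : 0 < t := div_pos hγ hδ
  have hpv : p = x + s • v := by
    funext i
    have h1 : α * p i + β * y i = x i := by
      have := congrFun hxe i
      simpa [Pi.add_apply, Pi.smul_apply, smul_eq_mul] using this
    simp only [Pi.add_apply, Pi.smul_apply, smul_eq_mul, hv, Pi.sub_apply, hsdef]
    field_simp
    linear_combination h1 - x i * hαβ
  have hqv : q = x - (1 + t) • v := by
    funext i
    have h1 : γ * x i + δ * q i = y i := by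
      have := congrFun hye i
      simpa [Pi.add_apply, Pi.smul_apply, smul_eq_mul] using this
    simp only [Pi.sub_apply, Pi.smul_apply, smul_eq_mul, hv, htdef]
    field_simp
    linear_combination h1 - y i * hγδ
  have hvne : v ≠ 0 := sub_ne_zero.mpr hxy
  set d := eNorm v with hd
  have hd0 : 0 < d := by
    rw [hd]
    unfold eNorm
    apply Real.sqrt_pos.mpr
    obtain ⟨i, hi⟩ := Function.ne_iff.mp hvne
    exact Finset.sum_pos' (fun j _ => sq_nonneg _)
      ⟨i, Finset.mem_univ i, lt_of_le_of_ne (sq_nonneg _) (Ne.symm (pow_ne_zero 2 hi))⟩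
  have hpq : p - q = (s + 1 + t) • v := by rw [hpv, hqv]; funext i; simp [smul_eq_mul]; ring
  have hpx : p - x = s • v := by rw [hpv]; funext i; simp [smul_eq_mul]
  have hqy : q - y = (-t) • v := by
    rw [hqv]
    funext i
    simp only [Pi.sub_apply, Pi.smul_apply, smul_eq_mul, hv]
    ring
  set σ := (s + 1 + t) / (s * t) with hσ
  have hσpos : 0 < σ := div_pos (by linarith) (mul_pos hs ht)
  have hLHS : (eNorm (x - y) * eNorm (p - q)) / (eNorm (p - x) * eNorm (q - y)) = σ := by
    rw [← hv, hpq, hpx, hqy, eNorm_smul', eNorm_smul', eNorm_smul', ← hd]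
    rw [abs_of_pos (by linarith : (0:ℝ) < s + 1 + t), abs_of_pos hs, abs_neg, abs_of_pos ht]
    rw [hσ]
    field_simp
  rw [ge_iff_le, hLHS]
  have hxi : ∀ i, 0 < a i ⬝ᵥ x - b i := fun i => sub_pos.mpr (hx i)
  have key : ∀ i, ((a i ⬝ᵥ x - b i) ^ 2)⁻¹ * (a i ⬝ᵥ v) ^ 2 ≤ σ ^ 2 := by
    intro i
    set g := a i ⬝ᵥ x - b i with hg
    set c := a i ⬝ᵥ v with hc
    have hgpos : 0 < g := hxi i
    have h1 : 0 ≤ g + s * c := by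
      have hle := hp i
      have hap : a i ⬝ᵥ p = a i ⬝ᵥ x + s * c := by
        rw [hpv, dotProduct_add, dotProduct_smul, smul_eq_mul]
      rw [hap] at hle
      linarith
    have h2 : 0 ≤ g - (1 + t) * c := by
      have hle := hq i
      have haq : a i ⬝ᵥ q = a i ⬝ᵥ x - (1 + t) * c := by
        rw [hqv, dotProduct_sub, dotProduct_smul, smul_eq_mul]
      rw [haq] at hle
      linarith
    have hub : c * (s * t) ≤ (s + 1 + t) * g := by
      nlinarith [mul_nonneg hs.le h2, mul_pos ht hgpos]
    have hlb : -((s + 1 + t) * g) ≤ c * (s * t) := by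
      nlinarith [mul_nonneg ht.le h1, mul_pos hs hgpos]
    have hsq : (c * (s * t)) ^ 2 ≤ ((s + 1 + t) * g) ^ 2 := sq_le_sq' hlb hub
    rw [inv_mul_eq_div, hσ, div_pow, div_le_div_iff₀ (by positivity) (by positivity)]
    nlinarith [hsq]
  have hsum : (x - y) ⬝ᵥ (Hmat a b x).mulVec (x - y) ≤ (m : ℝ) * σ ^ 2 := by
    rw [← hv, quad_eq']
    calc ∑ i, ((a i ⬝ᵥ x - b i) ^ 2)⁻¹ * (a i ⬝ᵥ v) ^ 2 ≤ ∑ _i : Fin m, σ ^ 2 :=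
          Finset.sum_le_sum fun i _ => key i
      _ = (m : ℝ) * σ ^ 2 := by
          rw [Finset.sum_const, Finset.card_univ, Fintype.card_fin, nsmul_eq_mul]
  have hloc : localNorm a b x (x - y) ≤ Real.sqrt m * σ := by
    unfold localNorm
    calc Real.sqrt ((x - y) ⬝ᵥ (Hmat a b x).mulVec (x - y)) ≤ Real.sqrt ((m : ℝ) * σ ^ 2) :=
          Real.sqrt_le_sqrt hsum
      _ = Real.sqrt m * σ := by
          rw [Real.sqrt_mul (Nat.cast_nonneg m), Real.sqrt_sq hσpos.le]
  have hln0 : 0 ≤ localNorm a b x (x - y) := Real.sqrt_nonneg _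
  calc 1 / Real.sqrt m * localNorm a b x (x - y)
      ≤ 1 / Real.sqrt m * (Real.sqrt m * σ) :=
        mul_le_mul_of_nonneg_left hloc (by positivity)
    _ = (1 / Real.sqrt m * Real.sqrt m) * σ := by ring
    _ ≤ 1 * σ := by
        rcases eq_or_ne (Real.sqrt m) 0 with h | h
        · simp [h, hσpos.le]
        · rw [one_div_mul_cancel h]
    _ = σ := one_mul σ
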